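/- Let Ω : ℝ → Matrix (Fin n) (Fin n) ℂ and suppose Ω has derivative D at the point t (HasDerivAt Ω D t). Then the map s ↦ exp(Ω s) has derivative at t equal to ∫_{x∈[0,1]} exp(x • Ω t) * D * exp((1−x) • Ω t) dx. -/

import Mathlib

set_option maxHeartbeats 1000000

open scoped Matrix.Norms.L2Operator
open NormedSpace Asymptotics Filter

section aux
variable {n : ℕ}

private lemma mexp_norm_one_le : ‖(1 : Matrix (Fin n) (Fin n) ℂ)‖ ≤ 1 := by
  rw [Matrix.cstar_norm_def, map_one]
  exact ContinuousLinearMap.norm_id_le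

private lemma mexp_norm_pow_le (A : Matrix (Fin n) (Fin n) ℂ) (k : ℕ) : ‖A ^ k‖ ≤ ‖A‖ ^ k := by
  cases k with
  | zero => simpa using mexp_norm_one_le
  | succ k => exact norm_pow_le' A k.succ_pos

private lemma mexp_norm_exp_le (A : Matrix (Fin n) (Fin n) ℂ) : ‖exp A‖ ≤ Real.exp ‖A‖ := by
  rw [exp_eq_tsum ℂ]
  refine (norm_tsum_le_tsum_norm (norm_expSeries_summable' A)).trans ?_
  rw [Real.exp_eq_exp_ℝ, exp_eq_tsum_div]
  refine Summable.tsum_le_tsum (fun k => ?_) (norm_expSeries_summable' A)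
    (Real.summable_pow_div_factorial ‖A‖)
  rw [norm_smul, div_eq_inv_mul]
  refine mul_le_mul ?_ (mexp_norm_pow_le A k) (norm_nonneg _) (by positivity)
  rw [norm_inv]
  simp

private lemma mexp_hasDerivAt_smul (A : Matrix (Fin n) (Fin n) ℂ) (x : ℝ) :
    HasDerivAt (fun u : ℝ => exp (u • A)) (exp (x • A) * A) x := by
  exact hasDerivAt_exp_smul_const (𝕂 := ℝ) A x

private lemma mexp_duhamel (A B : Matrix (Fin n) (Fin n) ℂ) :
    exp A - exp B
      = ∫ x in (0:ℝ)..1, exp (x • A) * (A - B) * exp ((1-x) • B) := by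
  have hderiv : ∀ x ∈ Set.uIcc (0:ℝ) 1,
      HasDerivAt (fun x : ℝ => exp (x • A) * exp ((1-x) • B))
        (exp (x • A) * (A - B) * exp ((1-x) • B)) x := by
    intro x _
    have h1 := mexp_hasDerivAt_smul A x
    have hlin : HasDerivAt (fun u : ℝ => 1 - u) (-1) x := by
      simpa using (hasDerivAt_id x).const_sub 1
    have h2 : HasDerivAt (fun u : ℝ => exp ((1-u) • B))
        ((-1 : ℝ) • (exp ((1-x) • B) * B)) x :=
      (mexp_hasDerivAt_smul B (1-x)).scomp x hlin
    have hmul := h1.mul h2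
    convert hmul using 1
    case e'_4 => rfl
    case e'_5 => rfl
    case e'_6 => rfl
    case e'_8 => rfl
    have hc : Commute B (exp ((1-x) • B)) :=
      ((Commute.refl B).smul_right ((1:ℝ)-x)).exp_right
    rw [neg_one_smul, mul_neg, ← hc.eq]
    noncomm_ring
  have hcont : Continuous (fun x : ℝ => exp (x • A) * (A - B) * exp ((1-x) • B)) := by
    refine (Continuous.mul ?_ continuous_const).mul ?_
    · exact (@exp_continuous _ _ (NormedAlgebra.restrictScalars ℚ ℂ _) _).comp (continuous_id.smul continuous_const)
    · exact (@exp_continuous _ _ (NormedAlgebra.restrictScalars ℚ ℂ _) _).comp ((continuous_const.sub continuous_id).smul continuous_const)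
  have h := intervalIntegral.integral_eq_sub_of_hasDerivAt hderiv
    (hcont.intervalIntegrable 0 1)
  rw [h]
  simp [exp_zero]

private lemma mexp_lip {R : ℝ} {A B : Matrix (Fin n) (Fin n) ℂ}
    (hA : ‖A‖ ≤ R) (hB : ‖B‖ ≤ R) :
    ‖exp A - exp B‖ ≤ Real.exp R * Real.exp R * ‖A - B‖ := by
  rw [mexp_duhamel]
  have hbd : ∀ x ∈ Set.uIoc (0:ℝ) 1,
      ‖exp (x • A) * (A - B) * exp ((1-x) • B)‖
        ≤ Real.exp R * Real.exp R * ‖A - B‖ := by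
    intro x hx
    rw [Set.uIoc_of_le zero_le_one] at hx
    obtain ⟨hx0, hx1⟩ := hx
    have hRA : ‖x • A‖ ≤ R := by
      rw [norm_smul, Real.norm_eq_abs, abs_of_pos hx0]
      calc x * ‖A‖ ≤ 1 * ‖A‖ := by gcongr
        _ ≤ R := by simpa using hA
    have hRB : ‖(1 - x) • B‖ ≤ R := by
      rw [norm_smul, Real.norm_eq_abs, abs_of_nonneg (by linarith)]
      calc (1 - x) * ‖B‖ ≤ 1 * ‖B‖ := by
            have := norm_nonneg B
            nlinarith
        _ ≤ R := by simpa using hB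
    have e1 := (mexp_norm_exp_le (x • A)).trans (Real.exp_le_exp.2 hRA)
    have e2 := (mexp_norm_exp_le ((1-x) • B)).trans (Real.exp_le_exp.2 hRB)
    calc ‖exp (x • A) * (A - B) * exp ((1-x) • B)‖
        ≤ ‖exp (x • A) * (A - B)‖ * ‖exp ((1-x) • B)‖ := norm_mul_le _ _
      _ ≤ (‖exp (x • A)‖ * ‖A - B‖) * ‖exp ((1-x) • B)‖ := by
          gcongr; exact norm_mul_le _ _
      _ ≤ (Real.exp R * ‖A - B‖) * Real.exp R := by gcongr
      _ = Real.exp R * Real.exp R * ‖A - B‖ := by ring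
  have := intervalIntegral.norm_integral_le_of_norm_le_const hbd
  simpa using this

end aux

/-- The derivative of the matrix exponential along a path, integral form: if `Ω` has derivative
`D` at `t`, then `s ↦ exp (Ω s)` has derivative `∫ x in [0,1], exp (x • Ω t) * D * exp ((1-x) • Ω t)`
at `t`. -/
theorem exp_hasDerivAt_integral {n : ℕ} (Ω : ℝ → Matrix (Fin n) (Fin n) ℂ)
    (D : Matrix (Fin n) (Fin n) ℂ) (t : ℝ) (hΩ : HasDerivAt Ω D t) :
    HasDerivAt (fun s : ℝ => NormedSpace.exp (Ω s))
      (∫ x in (0:ℝ)..1,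
        NormedSpace.exp (x • Ω t) * D * NormedSpace.exp ((1 - x) • Ω t)) t := by
  set L := ∫ x in (0:ℝ)..1, exp (x • Ω t) * D * exp ((1 - x) • Ω t) with hLdef
  set R := ‖Ω t‖ + 1 with hRdef
  set K := Real.exp R with hKdef
  have hK1 : 1 ≤ K := Real.one_le_exp (by positivity)
  have hK0 : 0 < K := lt_of_lt_of_le one_pos hK1
  rw [hasDerivAt_iff_isLittleO]
  have h1 : (fun s => Ω s - Ω t - (s - t) • D) =o[nhds t] (fun s => s - t) :=
    hasDerivAt_iff_isLittleO.mp hΩ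
  have hcΩ : Tendsto Ω (nhds t) (nhds (Ω t)) := hΩ.continuousAt
  have htend0 : Tendsto (fun s => ‖Ω s - Ω t‖) (nhds t) (nhds 0) := by
    have : Tendsto (fun s => Ω s - Ω t) (nhds t) (nhds (Ω t - Ω t)) :=
      hcΩ.sub tendsto_const_nhds
    rw [sub_self] at this
    simpa using this.norm
  have hev : ∀ᶠ s in nhds t, ‖Ω s - Ω t‖ ≤ 1 := by
    have := htend0.eventually (ge_mem_nhds (show (0:ℝ) < 1 from one_pos))
    filter_upwards [this] with s hs using hs
  -- the eventual norm bound
  have hbound : ∀ᶠ s in nhds t, ‖exp (Ω s) - exp (Ω t) - (s - t) • L‖ ≤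
      K * K * ‖Ω s - Ω t - (s - t) • D‖
        + K * K * K * ‖D‖ * (‖Ω s - Ω t‖ * ‖s - t‖) := by
    filter_upwards [hev] with s hs
    have hΩtR : ‖Ω t‖ ≤ R := by rw [hRdef]; linarith
    have hΩsR : ‖Ω s‖ ≤ R := by
      calc ‖Ω s‖ = ‖Ω t + (Ω s - Ω t)‖ := by rw [add_sub_cancel]
        _ ≤ ‖Ω t‖ + ‖Ω s - Ω t‖ := norm_add_le _ _
        _ ≤ ‖Ω t‖ + 1 := by linarith
        _ = R := rfl
    -- rewrite (s-t) • L as an integral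
    have hL : (s - t) • L = ∫ x in (0:ℝ)..1,
        exp (x • Ω t) * ((s - t) • D) * exp ((1 - x) • Ω t) := by
      rw [hLdef, ← intervalIntegral.integral_smul]
      congr 1
      funext x
      rw [mul_smul_comm, smul_mul_assoc]
    have hcont1 : Continuous (fun x : ℝ =>
        exp (x • Ω s) * (Ω s - Ω t) * exp ((1 - x) • Ω t)) := by
      refine (Continuous.mul ?_ continuous_const).mul ?_
      · exact (@exp_continuous _ _ (NormedAlgebra.restrictScalars ℚ ℂ _) _).comp (continuous_id.smul continuous_const)
      · exact (@exp_continuous _ _ (NormedAlgebra.restrictScalars ℚ ℂ _) _).comp ((continuous_const.sub continuous_id).smul continuous_const)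
    have hcont2 : Continuous (fun x : ℝ =>
        exp (x • Ω t) * ((s - t) • D) * exp ((1 - x) • Ω t)) := by
      refine (Continuous.mul ?_ continuous_const).mul ?_
      · exact (@exp_continuous _ _ (NormedAlgebra.restrictScalars ℚ ℂ _) _).comp (continuous_id.smul continuous_const)
      · exact (@exp_continuous _ _ (NormedAlgebra.restrictScalars ℚ ℂ _) _).comp ((continuous_const.sub continuous_id).smul continuous_const)
    rw [mexp_duhamel (Ω s) (Ω t), hL,
      ← intervalIntegral.integral_sub (hcont1.intervalIntegrable 0 1)
        (hcont2.intervalIntegrable 0 1)]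
    have hbd : ∀ x ∈ Set.uIoc (0:ℝ) 1,
        ‖exp (x • Ω s) * (Ω s - Ω t) * exp ((1 - x) • Ω t)
          - exp (x • Ω t) * ((s - t) • D) * exp ((1 - x) • Ω t)‖
          ≤ K * K * ‖Ω s - Ω t - (s - t) • D‖
            + K * K * K * ‖D‖ * (‖Ω s - Ω t‖ * ‖s - t‖) := by
      intro x hx
      rw [Set.uIoc_of_le zero_le_one] at hx
      obtain ⟨hx0, hx1⟩ := hx
      have hRs : ‖x • Ω s‖ ≤ R := by
        rw [norm_smul, Real.norm_eq_abs, abs_of_pos hx0]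
        calc x * ‖Ω s‖ ≤ 1 * ‖Ω s‖ := by gcongr
          _ ≤ R := by simpa using hΩsR
      have hRt : ‖x • Ω t‖ ≤ R := by
        rw [norm_smul, Real.norm_eq_abs, abs_of_pos hx0]
        calc x * ‖Ω t‖ ≤ 1 * ‖Ω t‖ := by gcongr
          _ ≤ R := by simpa using hΩtR
      have hRq : ‖(1 - x) • Ω t‖ ≤ R := by
        rw [norm_smul, Real.norm_eq_abs, abs_of_nonneg (by linarith)]
        calc (1 - x) * ‖Ω t‖ ≤ 1 * ‖Ω t‖ := by
              have := norm_nonneg (Ω t); nlinarith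
          _ ≤ R := by simpa using hΩtR
      set P₁ := exp (x • Ω s)
      set P₂ := exp (x • Ω t)
      set Q := exp ((1 - x) • Ω t)
      have e1 : ‖P₁‖ ≤ K := (mexp_norm_exp_le _).trans (Real.exp_le_exp.2 hRs)
      have eQ : ‖Q‖ ≤ K := (mexp_norm_exp_le _).trans (Real.exp_le_exp.2 hRq)
      have e12 : ‖P₁ - P₂‖ ≤ K * K * ‖Ω s - Ω t‖ := by
        have := mexp_lip hRs hRt
        refine this.trans ?_
        rw [← smul_sub, norm_smul, Real.norm_eq_abs, abs_of_pos hx0]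
        calc K * K * (x * ‖Ω s - Ω t‖) ≤ K * K * (1 * ‖Ω s - Ω t‖) := by gcongr
          _ = K * K * ‖Ω s - Ω t‖ := by ring
      have hDd : ‖(s - t) • D‖ = ‖s - t‖ * ‖D‖ := by
        rw [norm_smul]
      obtain ⟨Dd, hDdef⟩ : ∃ Dd, (s - t) • D = Dd := ⟨_, rfl⟩
      rw [hDdef] at hDd
      rw [hDdef]
      have key : P₁ * (Ω s - Ω t) * Q - P₂ * Dd * Q
          = (P₁ * ((Ω s - Ω t) - Dd) + (P₁ - P₂) * Dd) * Q := by
        noncomm_ring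
      rw [key]
      calc ‖(P₁ * ((Ω s - Ω t) - Dd) + (P₁ - P₂) * Dd) * Q‖
          ≤ ‖P₁ * ((Ω s - Ω t) - Dd) + (P₁ - P₂) * Dd‖ * ‖Q‖ :=
            norm_mul_le _ _
        _ ≤ (‖P₁ * ((Ω s - Ω t) - Dd)‖ + ‖(P₁ - P₂) * Dd‖) * ‖Q‖ := by
            gcongr; exact norm_add_le _ _
        _ ≤ (‖P₁‖ * ‖(Ω s - Ω t) - Dd‖ + ‖P₁ - P₂‖ * ‖Dd‖) * ‖Q‖ := by
            gcongr <;> exact norm_mul_le _ _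
        _ ≤ (K * ‖(Ω s - Ω t) - Dd‖
              + (K * K * ‖Ω s - Ω t‖) * ‖Dd‖) * K := by gcongr
        _ = K * K * ‖Ω s - Ω t - Dd‖
            + K * K * K * ‖D‖ * (‖Ω s - Ω t‖ * ‖s - t‖) := by
            rw [hDd]; ring
    have := intervalIntegral.norm_integral_le_of_norm_le_const hbd
    simpa only [sub_zero, abs_one, mul_one] using this
  -- assemble the little-o
  have h2 : (fun s => ‖Ω s - Ω t‖ * ‖s - t‖) =o[nhds t] (fun s => s - t) := by
    have ha : (fun s => ‖Ω s - Ω t‖) =o[nhds t] (fun _ : ℝ => (1:ℝ)) :=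
      (isLittleO_one_iff ℝ).2 htend0
    have hb : (fun s : ℝ => ‖s - t‖) =O[nhds t] (fun s => s - t) :=
      (isBigO_refl (fun s : ℝ => s - t) (nhds t)).norm_left
    have := ha.mul_isBigO hb
    simpa using this
  have hg : (fun s => K * K * ‖Ω s - Ω t - (s - t) • D‖
      + K * K * K * ‖D‖ * (‖Ω s - Ω t‖ * ‖s - t‖)) =o[nhds t] (fun s => s - t) :=
    (h1.norm_left.const_mul_left (K * K)).add (h2.const_mul_left (K * K * K * ‖D‖))
  have hO : (fun s => exp (Ω s) - exp (Ω t) - (s - t) • L) =O[nhds t]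
      (fun s => K * K * ‖Ω s - Ω t - (s - t) • D‖
        + K * K * K * ‖D‖ * (‖Ω s - Ω t‖ * ‖s - t‖)) := by
    rw [isBigO_iff]
    refine ⟨1, ?_⟩
    filter_upwards [hbound] with s hs
    rw [one_mul]
    exact hs.trans (le_abs_self _)
  exact hO.trans_isLittleO hg
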